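/- Let (X, A) be a (k_{t−1}, b_r) resolvable configuration with X = [k], lines A = {A_1,…,A_b} ordered so that for each ℓ ∈ {1,…,t−1} the lines A_{(ℓ−1)s+1},…,A_{ℓs} form a parallel class, where s = k/r and b = s(t−1). Partition [s] into ⌈s/r⌉ nonempty subsets B_1,…,B_{⌈s/r⌉}, each of size at most r. Let M be the b×k incidence matrix of (X,A), let W be the ⌈s/r⌉×b binary matrix with w_{i,j} = 1 iff j ∈ B_i, and let H be the (b+⌈s/r⌉) × (k+b+⌈s/r⌉) binary block matrix H = [[M, I_b, 0], [0, W, I_{⌈s/r⌉}]]. If t is odd, then the binary linear code C with parity check matrix H is an (n, k, r, t)-SLRC with length n = k + b + ⌈s/r⌉ = k + (t−1)k/r + ⌈k/r²⌉ and dimension k; hence its rate is k/n = 1/(1 + (t−1)/r + ⌈k/r²⌉/k). -/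

import Mathlib

open Finset

/-- `R` is a recovering set of coordinate `i` for the linear code `C`. -/
def IsRecoveringSet {F : Type*} [Field F] {ι : Type*} [Fintype ι] [DecidableEq ι]
    (C : Submodule F (ι → F)) (i : ι) (R : Finset ι) : Prop :=
  i ∉ R ∧ ∃ a : ι → F, (∀ j ∈ R, a j ≠ 0) ∧ ∀ x ∈ C, x i = ∑ j ∈ R, a j * x j

/-- `C` is an `(n,k,r,t)`-sequential locally repairable code. -/
def IsSLRC {F : Type*} [Field F] {ι : Type*} [Fintype ι] [DecidableEq ι]
    (C : Submodule F (ι → F)) (r t : ℕ) : Prop :=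
  ∀ E : Finset ι, E.card ≤ t →
    ∃ L : List ι, L.Nodup ∧ L.toFinset = E ∧
      ∀ ℓ : Fin L.length, ∃ R : Finset ι,
        IsRecoveringSet C (L.get ℓ) R ∧ R.card ≤ r ∧
        R ⊆ Eᶜ ∪ (L.take ℓ.1).toFinset

/-- The binary code with parity check matrix `H = [[M, I_b, 0], [0, W, I_q]]`, where
`M` is the incidence matrix of the lines `A` and `W` the incidence matrix of the
blocks `B`: codewords are exactly the `x` with
`x_{k+i} = ∑_{j ∈ A i} x_j` for `i ∈ [b]` and
`x_{k+b+i} = ∑_{j ∈ B i} x_{k+j}` for `i ∈ [q]`. -/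
def ConfigCode (k b q : ℕ) (A : Fin b → Finset (Fin k)) (B : Fin q → Finset (Fin b)) :
    Submodule (ZMod 2) ((Fin k ⊕ Fin b ⊕ Fin q) → ZMod 2) where
  carrier := {x |
    (∀ i : Fin b, x (Sum.inr (Sum.inl i)) = ∑ j ∈ A i, x (Sum.inl j)) ∧
    (∀ i : Fin q, x (Sum.inr (Sum.inr i)) = ∑ j ∈ B i, x (Sum.inr (Sum.inl j)))}
  add_mem' := by
    rintro a b ⟨ha1, ha2⟩ ⟨hb1, hb2⟩
    constructor
    · intro i
      simp only [Pi.add_apply, ha1 i, hb1 i, Finset.sum_add_distrib]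
    · intro i
      simp only [Pi.add_apply, ha2 i, hb2 i, Finset.sum_add_distrib]
  zero_mem' := by
    constructor <;> intro i <;> simp
  smul_mem' := by
    rintro c x ⟨hx1, hx2⟩
    constructor
    · intro i
      simp only [Pi.smul_apply, smul_eq_mul, hx1 i, Finset.mul_sum]
    · intro i
      simp only [Pi.smul_apply, smul_eq_mul, hx2 i, Finset.mul_sum]


variable {k b q : ℕ} {A : Fin b → Finset (Fin k)} {B : Fin q → Finset (Fin b)}
variable {C : Submodule (ZMod 2) ((Fin k ⊕ Fin b ⊕ Fin q) → ZMod 2)}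


lemma isRec_point
    (hC : ∀ x ∈ C, ∀ i : Fin b, x (Sum.inr (Sum.inl i)) = ∑ j ∈ A i, x (Sum.inl j))
    (i : Fin b) (p : Fin k) (hp : p ∈ A i) :
    IsRecoveringSet C (Sum.inl p)
      (insert (Sum.inr (Sum.inl i)) (((A i).erase p).image Sum.inl)) := by
  constructor
  · simp
  · refine ⟨fun _ => 1, fun j _ => one_ne_zero, fun x hx => ?_⟩
    have h := hC x hx i
    rw [← Finset.add_sum_erase _ _ hp] at h
    rw [Finset.sum_insert (by simp), Finset.sum_image (by simp)]
    simp only [one_mul]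
    have : x (Sum.inl p) = x (Sum.inr (Sum.inl i)) - ∑ j ∈ (A i).erase p, x (Sum.inl j) := by
      rw [h]; ring
    rw [this, CharTwo.sub_eq_add]

lemma isRec_line_via_points
    (hC : ∀ x ∈ C, ∀ i : Fin b, x (Sum.inr (Sum.inl i)) = ∑ j ∈ A i, x (Sum.inl j))
    (i : Fin b) :
    IsRecoveringSet C (Sum.inr (Sum.inl i)) ((A i).image Sum.inl) := by
  refine ⟨by simp, fun _ => 1, fun j _ => one_ne_zero, fun x hx => ?_⟩
  rw [Finset.sum_image (by simp)]
  simpa using hC x hx i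

lemma isRec_block
    (hC : ∀ x ∈ C, ∀ i : Fin q, x (Sum.inr (Sum.inr i)) = ∑ j ∈ B i, x (Sum.inr (Sum.inl j)))
    (w : Fin q) :
    IsRecoveringSet C (Sum.inr (Sum.inr w)) ((B w).image (fun j => Sum.inr (Sum.inl j))) := by
  refine ⟨by simp, fun _ => 1, fun j _ => one_ne_zero, fun x hx => ?_⟩
  rw [Finset.sum_image (by simp)]
  simpa using hC x hx w

lemma isRec_line_via_block
    (hC : ∀ x ∈ C, ∀ i : Fin q, x (Sum.inr (Sum.inr i)) = ∑ j ∈ B i, x (Sum.inr (Sum.inl j)))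
    (w : Fin q) (i : Fin b) (hi : i ∈ B w) :
    IsRecoveringSet C (Sum.inr (Sum.inl i))
      (insert (Sum.inr (Sum.inr w)) (((B w).erase i).image (fun j => Sum.inr (Sum.inl j)))) := by
  constructor
  · simp
  · refine ⟨fun _ => 1, fun j _ => one_ne_zero, fun x hx => ?_⟩
    have h := hC x hx w
    rw [← Finset.add_sum_erase _ _ hi] at h
    rw [Finset.sum_insert (by simp), Finset.sum_image (by simp)]
    simp only [one_mul]
    have : x (Sum.inr (Sum.inl i)) = x (Sum.inr (Sum.inr w)) - ∑ j ∈ (B w).erase i, x (Sum.inr (Sum.inl j)) := by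
      rw [h]; ring
    rw [this, CharTwo.sub_eq_add]
lemma even_card_of_involution {α : Type*} [DecidableEq α] (P : Finset α) (g : α → α)
    (h1 : ∀ x ∈ P, g x ∈ P) (h2 : ∀ x ∈ P, g (g x) = x) (h3 : ∀ x ∈ P, g x ≠ x) :
    Even P.card := by
  classical
  induction P using Finset.strongInduction with
  | _ P ih =>
    rcases P.eq_empty_or_nonempty with rfl | ⟨x, hx⟩
    · simp
    · have hgx : g x ∈ P.erase x := Finset.mem_erase.mpr ⟨h3 x hx, h1 x hx⟩
      set P' := (P.erase x).erase (g x) with hP'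
      have hsub : P' ⊂ P := by
        refine Finset.ssubset_of_subset_of_ssubset ?_ (Finset.erase_ssubset hx)
        exact Finset.erase_subset _ _
      have hmem : ∀ y ∈ P', y ∈ P ∧ y ≠ x ∧ y ≠ g x := by
        intro y hy
        simp only [hP', Finset.mem_erase] at hy
        exact ⟨hy.2.2, hy.2.1, hy.1⟩
      have hE : Even P'.card := by
        refine ih P' hsub ?_ ?_ ?_
        · intro y hy
          obtain ⟨hyP, hyx, hygx⟩ := hmem y hy
          refine Finset.mem_erase.mpr ⟨?_, Finset.mem_erase.mpr ⟨?_, h1 y hyP⟩⟩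
          · intro h; apply hyx; rw [← h2 y hyP, h, h2 x hx]
          · intro h; apply hygx; rw [← h2 y hyP, h]
        · intro y hy; exact h2 y (hmem y hy).1
        · intro y hy; exact h3 y (hmem y hy).1
      have hc1 : P'.card = P.card - 2 := by
        rw [hP', Finset.card_erase_of_mem hgx, Finset.card_erase_of_mem hx]; omega
      have hc2 : 1 < P.card := Finset.one_lt_card.mpr ⟨x, hx, g x, h1 x hx, (h3 x hx).symm⟩
      rw [Nat.even_iff] at hE ⊢
      omega

lemma goodList_cons {F : Type*} [Field F] {ι : Type*} [Fintype ι] [DecidableEq ι]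
    (C : Submodule F (ι → F)) (r : ℕ) (i : ι) (E : Finset ι) (L : List ι)
    (hiE : i ∈ E)
    (hR : ∃ R, IsRecoveringSet C i R ∧ R.card ≤ r ∧ R ⊆ Eᶜ)
    (hnd : L.Nodup) (htf : L.toFinset = E.erase i)
    (hL : ∀ ℓ : Fin L.length, ∃ R : Finset ι,
        IsRecoveringSet C (L.get ℓ) R ∧ R.card ≤ r ∧
        R ⊆ (E.erase i)ᶜ ∪ (L.take ℓ.1).toFinset) :
    (i :: L).Nodup ∧ (i :: L).toFinset = E ∧
      ∀ ℓ : Fin (i :: L).length, ∃ R : Finset ι,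
        IsRecoveringSet C ((i :: L).get ℓ) R ∧ R.card ≤ r ∧
        R ⊆ Eᶜ ∪ ((i :: L).take ℓ.1).toFinset := by
  refine ⟨?_, ?_, ?_⟩
  · refine List.nodup_cons.mpr ⟨?_, hnd⟩
    intro h
    have : i ∈ L.toFinset := List.mem_toFinset.mpr h
    rw [htf] at this
    exact (Finset.mem_erase.mp this).1 rfl
  · rw [List.toFinset_cons, htf, Finset.insert_erase hiE]
  · intro ℓ
    refine Fin.cases ?_ ?_ ℓ
    · obtain ⟨R, h1, h2, h3⟩ := hR
      exact ⟨R, h1, h2, h3.trans (Finset.subset_union_left)⟩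
    · intro m
      obtain ⟨R, h1, h2, h3⟩ := hL m
      refine ⟨R, h1, h2, ?_⟩
      intro a ha
      have := h3 ha
      rw [Finset.compl_erase] at this
      simp only [Finset.mem_union, Finset.mem_insert] at this
      show a ∈ Eᶜ ∪ ((i :: L).take (m.1 + 1)).toFinset
      rw [List.take_succ_cons, List.toFinset_cons]
      rcases this with (rfl | h) | h
      · exact Finset.mem_union_right _ (Finset.mem_insert_self _ _)
      · exact Finset.mem_union_left _ h
      · exact Finset.mem_union_right _ (Finset.mem_insert_of_mem h)
lemma mem_configCode {k b q : ℕ} {A : Fin b → Finset (Fin k)} {B : Fin q → Finset (Fin b)}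
    {x : (Fin k ⊕ Fin b ⊕ Fin q) → ZMod 2} :
    x ∈ ConfigCode k b q A B ↔
      ((∀ i : Fin b, x (Sum.inr (Sum.inl i)) = ∑ j ∈ A i, x (Sum.inl j)) ∧
       (∀ i : Fin q, x (Sum.inr (Sum.inr i)) = ∑ j ∈ B i, x (Sum.inr (Sum.inl j)))) :=
  Iff.rfl

lemma finrank_configCode (k b q : ℕ) (A : Fin b → Finset (Fin k)) (B : Fin q → Finset (Fin b)) :
    Module.finrank (ZMod 2) (ConfigCode k b q A B) = k := by
  classical
  let π : ConfigCode k b q A B →ₗ[ZMod 2] (Fin k → ZMod 2) :=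
    (LinearMap.funLeft (ZMod 2) (ZMod 2) Sum.inl).comp (ConfigCode k b q A B).subtype
  have hinj : Function.Injective π := by
    intro x y hxy
    have hfun : ∀ j : Fin k, (x : (Fin k ⊕ Fin b ⊕ Fin q) → ZMod 2) (Sum.inl j) = (y : (Fin k ⊕ Fin b ⊕ Fin q) → ZMod 2) (Sum.inl j) := by
      intro j; exact congrFun hxy j
    obtain ⟨hx1, hx2⟩ := mem_configCode.mp x.2
    obtain ⟨hy1, hy2⟩ := mem_configCode.mp y.2
    ext c
    rcases c with j | i | w
    · exact hfun j
    · rw [hx1 i, hy1 i]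
      exact Finset.sum_congr rfl fun j _ => hfun j
    · rw [hx2 w, hy2 w]
      refine Finset.sum_congr rfl fun i _ => ?_
      rw [hx1 i, hy1 i]
      exact Finset.sum_congr rfl fun j _ => hfun j
  have hsurj : Function.Surjective π := by
    intro f
    refine ⟨⟨Sum.elim f (Sum.elim (fun i => ∑ j ∈ A i, f j)
      (fun w => ∑ i ∈ B w, ∑ j ∈ A i, f j)), ?_, ?_⟩, ?_⟩
    · intro i; simp
    · intro w; simp
    · ext j; rfl
  have := LinearEquiv.finrank_eq (LinearEquiv.ofBijective π ⟨hinj, hsurj⟩)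
  rw [this, Module.finrank_pi, Fintype.card_fin]

lemma rate_eq (k t r s b q : ℕ) (hr2 : 2 ≤ r) (hrk : r < k) (ht : 3 ≤ t)
    (hk : k = r * s) (hb : b = s * (t - 1)) :
    (k : ℚ) / ((k : ℚ) + b + q) = (1 + ((t : ℚ) - 1) / r + (q : ℚ) / k)⁻¹ := by
  have hk0 : (k : ℚ) ≠ 0 := by
    have : 0 < k := by omega
    exact_mod_cast this.ne'
  have hr0 : (r : ℚ) ≠ 0 := by
    have : 0 < r := by omega
    exact_mod_cast this.ne'
  have ht1 : ((t - 1 : ℕ) : ℚ) = (t : ℚ) - 1 := by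
    have : 1 ≤ t := by omega
    push_cast [Nat.cast_sub this]; ring
  have hs0 : (s : ℚ) ≠ 0 := by
    have : 0 < s := by nlinarith
    exact_mod_cast this.ne'
  have h1 : (1 + ((t : ℚ) - 1) / r + (q : ℚ) / k) = ((k : ℚ) + b + q) / k := by
    rw [← ht1]
    subst hk hb
    push_cast
    field_simp
  rw [h1, inv_div]

lemma exists_choice_inj {k b : ℕ} {A : Fin b → Finset (Fin k)}
    (hpair : ∀ x y : Fin k, x ≠ y →
      (Finset.univ.filter (fun i => x ∈ A i ∧ y ∈ A i)).card ≤ 1)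
    (P : Finset (Fin k)) (x : Fin k) :
    ∃ f : Fin b → Fin k,
      (∀ i : Fin b, (∃ y ∈ P, y ≠ x ∧ y ∈ A i) → f i ∈ P ∧ f i ≠ x ∧ f i ∈ A i) ∧
      (∀ i₁ i₂ : Fin b, x ∈ A i₁ → x ∈ A i₂ → (∃ y ∈ P, y ≠ x ∧ y ∈ A i₁) →
        (∃ y ∈ P, y ≠ x ∧ y ∈ A i₂) → f i₁ = f i₂ → i₁ = i₂) := by
  classical
  refine ⟨fun i => if h : ∃ y ∈ P, y ≠ x ∧ y ∈ A i then h.choose else x, ?_, ?_⟩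
  · intro i h
    simp only [dif_pos h]
    exact h.choose_spec
  · intro i₁ i₂ hx1 hx2 h1 h2 heq
    simp only [dif_pos h1, dif_pos h2] at heq
    obtain ⟨hyP, hyx, hy1⟩ := h1.choose_spec
    obtain ⟨hzP, hzx, hz2⟩ := h2.choose_spec
    rw [heq] at hy1
    refine Finset.card_le_one.mp (hpair x h2.choose (Ne.symm hzx)) i₁ ?_ i₂ ?_
    · exact Finset.mem_filter.mpr ⟨Finset.mem_univ _, hx1, hy1⟩
    · exact Finset.mem_filter.mpr ⟨Finset.mem_univ _, hx2, hz2⟩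

lemma exists_first (k t r s b q : ℕ) (ht3 : 3 ≤ t) (hs0 : 0 < s) (hr2 : 2 ≤ r)
    (htodd : Odd t)
    (A : Fin b → Finset (Fin k)) (B : Fin q → Finset (Fin b))
    (hline : ∀ i, (A i).card = r)
    (hpoint : ∀ x : Fin k, (Finset.univ.filter (fun i => x ∈ A i)).card = t - 1)
    (hpair : ∀ x y : Fin k, x ≠ y →
      (Finset.univ.filter (fun i => x ∈ A i ∧ y ∈ A i)).card ≤ 1)
    (hclass : ∀ ℓ : Fin (t - 1), ∀ x : Fin k,
      ∃! i : Fin b, (i : ℕ) / s = (ℓ : ℕ) ∧ x ∈ A i)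
    (hBlt : ∀ i, ∀ j ∈ B i, (j : ℕ) < s)
    (hBne : ∀ i, (B i).Nonempty) (hBcard : ∀ i, (B i).card ≤ r)
    (hBpart : ∀ j : Fin b, (j : ℕ) < s → ∃! i, j ∈ B i)
    (E : Finset (Fin k ⊕ Fin b ⊕ Fin q)) (hEne : E.Nonempty) (hEcard : E.card ≤ t) :
    ∃ i ∈ E, ∃ R, IsRecoveringSet (ConfigCode k b q A B) i R ∧ R.card ≤ r ∧ R ⊆ Eᶜ := by
  classical
  have hC1 : ∀ x ∈ ConfigCode k b q A B, ∀ i : Fin b,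
      x (Sum.inr (Sum.inl i)) = ∑ j ∈ A i, x (Sum.inl j) :=
    fun x hx => (mem_configCode.mp hx).1
  have hC2 : ∀ x ∈ ConfigCode k b q A B, ∀ i : Fin q,
      x (Sum.inr (Sum.inr i)) = ∑ j ∈ B i, x (Sum.inr (Sum.inl j)) :=
    fun x hx => (mem_configCode.mp hx).2
  set P : Finset (Fin k) := Finset.univ.filter (fun x => Sum.inl x ∈ E) with hP
  set Lp : Finset (Fin b) := Finset.univ.filter (fun i => Sum.inr (Sum.inl i) ∈ E) with hLp
  set Qp : Finset (Fin q) := Finset.univ.filter (fun w => Sum.inr (Sum.inr w) ∈ E) with hQp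
  have hPmem : ∀ x : Fin k, x ∈ P ↔ Sum.inl x ∈ E := by intro x; simp [hP]
  have hLmem : ∀ i : Fin b, i ∈ Lp ↔ Sum.inr (Sum.inl i) ∈ E := by intro i; simp [hLp]
  have hQmem : ∀ w : Fin q, w ∈ Qp ↔ Sum.inr (Sum.inr w) ∈ E := by intro w; simp [hQp]
  rcases P.eq_empty_or_nonempty with hPe | hPne
  · -- no erased points
    rcases Lp.eq_empty_or_nonempty with hLe | ⟨i, hi⟩
    · -- pick an erased block parity
      obtain ⟨e, he⟩ := hEne
      obtain ⟨w, rfl⟩ : ∃ w : Fin q, e = Sum.inr (Sum.inr w) := by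
        rcases e with x | i | w
        · exact absurd ((hPmem x).mpr he) (by simp [hPe])
        · exact absurd ((hLmem i).mpr he) (by simp [hLe])
        · exact ⟨w, rfl⟩
      refine ⟨Sum.inr (Sum.inr w), he, (B w).image (fun j => Sum.inr (Sum.inl j)),
        isRec_block hC2 w, ?_, ?_⟩
      · exact (Finset.card_image_le).trans (hBcard w)
      · intro a ha
        obtain ⟨j, _, rfl⟩ := Finset.mem_image.mp ha
        simp only [Finset.mem_compl]
        intro hmem
        exact absurd ((hLmem j).mpr hmem) (by simp [hLe])
    · -- pick an erased line parity, repair from points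
      refine ⟨Sum.inr (Sum.inl i), (hLmem i).mp hi, (A i).image Sum.inl,
        isRec_line_via_points hC1 i, ?_, ?_⟩
      · rw [Finset.card_image_of_injective _ Sum.inl_injective, hline]
      · intro a ha
        obtain ⟨j, _, rfl⟩ := Finset.mem_image.mp ha
        simp only [Finset.mem_compl]
        intro hmem
        exact absurd ((hPmem j).mpr hmem) (by simp [hPe])
  · by_cases hgood : ∃ x ∈ P, ∃ i : Fin b, x ∈ A i ∧ Sum.inr (Sum.inl i) ∉ E ∧
        ∀ y ∈ P, y ∈ A i → y = x
    · -- repair a point via a good line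
      obtain ⟨x, hx, i, hxi, hiE, hionly⟩ := hgood
      have hr0 : 0 < r := by omega
      refine ⟨Sum.inl x, (hPmem x).mp hx,
        insert (Sum.inr (Sum.inl i)) (((A i).erase x).image Sum.inl),
        isRec_point hC1 i x hxi, ?_, ?_⟩
      · refine (Finset.card_insert_le _ _).trans ?_
        rw [Finset.card_image_of_injective _ Sum.inl_injective,
          Finset.card_erase_of_mem hxi, hline]
        omega
      · intro a ha
        rcases Finset.mem_insert.mp ha with rfl | ha
        · exact Finset.mem_compl.mpr hiE
        · obtain ⟨j, hj, rfl⟩ := Finset.mem_image.mp ha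
          obtain ⟨hjx, hjA⟩ := Finset.mem_erase.mp hj
          refine Finset.mem_compl.mpr fun hmem => ?_
          exact hjx (hionly j ((hPmem j).mpr hmem) hjA)
    · -- no good line
      have hbad : ∀ x ∈ P, ∀ i : Fin b, x ∈ A i →
          Sum.inr (Sum.inl i) ∈ E ∨ ∃ y ∈ P, y ≠ x ∧ y ∈ A i := by
        intro x hx i hxi
        by_contra hcon
        push_neg at hcon
        refine hgood ⟨x, hx, i, hxi, hcon.1, fun y hy hyA => ?_⟩
        by_contra hne
        exact (hcon.2 y hy hne) hyA
      -- cardinality decomposition of E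
      have hEeq : E = P.image Sum.inl ∪ Lp.image (fun i => Sum.inr (Sum.inl i))
          ∪ Qp.image (fun w => Sum.inr (Sum.inr w)) := by
        ext e
        rcases e with x | i | w <;>
          simp [hPmem, hLmem, hQmem, Finset.mem_image, Finset.mem_union]
      have hEdec : E.card = P.card + Lp.card + Qp.card := by
        rw [hEeq]
        rw [Finset.card_union_of_disjoint, Finset.card_union_of_disjoint]
        · rw [Finset.card_image_of_injective _ Sum.inl_injective,
            Finset.card_image_of_injective _ (fun a b h => by simpa using h),
            Finset.card_image_of_injective _ (fun a b h => by simpa using h)]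
        · rw [Finset.disjoint_left]
          rintro a ha hb
          obtain ⟨j, _, rfl⟩ := Finset.mem_image.mp ha
          obtain ⟨j', _, h⟩ := Finset.mem_image.mp hb
          exact absurd h (by simp)
        · rw [Finset.disjoint_left]
          rintro a ha hb
          obtain ⟨w', _, h⟩ := Finset.mem_image.mp hb
          rcases Finset.mem_union.mp ha with ha | ha
          · obtain ⟨j, _, rfl⟩ := Finset.mem_image.mp ha
            exact absurd h (by simp)
          · obtain ⟨j, _, rfl⟩ := Finset.mem_image.mp ha
            exact absurd h (by simp)
      rcases eq_or_lt_of_le (Finset.one_le_card.mpr hPne) with hP1 | hP2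
      · -- exactly one erased point
        obtain ⟨x, hPx⟩ := Finset.card_eq_one.mp hP1.symm
        have hxP : x ∈ P := hPx ▸ Finset.mem_singleton_self x
        have hLpx : ∀ i : Fin b, x ∈ A i → i ∈ Lp := by
          intro i hxi
          rcases hbad x hxP i hxi with h | ⟨y, hy, hyx, _⟩
          · exact (hLmem i).mpr h
          · rw [hPx] at hy
            exact absurd (Finset.mem_singleton.mp hy) hyx
        have hsub : Finset.univ.filter (fun i => x ∈ A i) ⊆ Lp := by
          intro i hi
          exact hLpx i (Finset.mem_filter.mp hi).2
        have hcardle : t - 1 ≤ Lp.card := by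
          rw [← hpoint x]; exact Finset.card_le_card hsub
        have hQe : Qp = ∅ := by
          rw [← Finset.card_eq_zero]
          omega
        have hLpeq : Finset.univ.filter (fun i => x ∈ A i) = Lp := by
          apply Finset.eq_of_subset_of_card_le hsub
          rw [hpoint x]
          omega
        -- the class-0 line through x
        obtain ⟨i₀, ⟨hi₀s, hi₀x⟩, hi₀u⟩ := hclass ⟨0, by omega⟩ x
        have hi₀lt : (i₀ : ℕ) < s := by
          have := hi₀s
          simp only [] at this
          exact ((Nat.div_eq_zero_iff).mp this).resolve_left (by omega)
        obtain ⟨w, hw, _⟩ := hBpart i₀ hi₀lt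
        have hBw1 : 1 ≤ (B w).card := Finset.card_pos.mpr (hBne w)
        refine ⟨Sum.inr (Sum.inl i₀), (hLmem i₀).mp (hLpx i₀ hi₀x),
          insert (Sum.inr (Sum.inr w)) (((B w).erase i₀).image (fun j => Sum.inr (Sum.inl j))),
          isRec_line_via_block hC2 w i₀ hw, ?_, ?_⟩
        · refine (Finset.card_insert_le _ _).trans ?_
          have h1 : (((B w).erase i₀).image (fun j => Sum.inr (Sum.inl j) :
              Fin b → Fin k ⊕ Fin b ⊕ Fin q)).card ≤ ((B w).erase i₀).card :=
            Finset.card_image_le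
          rw [Finset.card_erase_of_mem hw] at h1
          have := hBcard w
          omega
        · intro a ha
          rcases Finset.mem_insert.mp ha with rfl | ha
          · refine Finset.mem_compl.mpr fun hmem => ?_
            have : w ∈ Qp := (hQmem w).mpr hmem
            rw [hQe] at this
            exact absurd this (Finset.notMem_empty w)
          · obtain ⟨j, hj, rfl⟩ := Finset.mem_image.mp ha
            obtain ⟨hji₀, hjB⟩ := Finset.mem_erase.mp hj
            refine Finset.mem_compl.mpr fun hmem => ?_
            have hjLp : j ∈ Lp := (hLmem j).mpr hmem
            rw [← hLpeq] at hjLp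
            have hxj : x ∈ A j := (Finset.mem_filter.mp hjLp).2
            have hjlt : (j : ℕ) < s := hBlt w j hjB
            have : j = i₀ := hi₀u j ⟨Nat.div_eq_of_lt hjlt, hxj⟩
            exact hji₀ this
      · -- at least two erased points : derive a contradiction
        exfalso
        -- per-point tight counting
        have key : ∀ x ∈ P,
            Qp.card = 0 ∧
            (Finset.univ.filter (fun i => x ∈ A i)).filter
                (fun i => i ∈ Lp) = Lp ∧
            ((Finset.univ.filter (fun i => x ∈ A i)).filter
                (fun i => ∃ y ∈ P, y ≠ x ∧ y ∈ A i)).card = P.card - 1 ∧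
            ((Finset.univ.filter (fun i => x ∈ A i)).filter
                (fun i => ∃ y ∈ P, y ≠ x ∧ y ∈ A i) ∩
             (Finset.univ.filter (fun i => x ∈ A i)).filter
                (fun i => i ∈ Lp)) = ∅ := by
          intro x hx
          obtain ⟨f, hfspec, hfinj⟩ := exists_choice_inj hpair P x
          set lx := Finset.univ.filter (fun i => x ∈ A i) with hlx
          set Dx := lx.filter (fun i => ∃ y ∈ P, y ≠ x ∧ y ∈ A i) with hDxdef
          set Nx := lx.filter (fun i => i ∈ Lp) with hNxdef
          have hDmem : ∀ i ∈ Dx, x ∈ A i ∧ ∃ y ∈ P, y ≠ x ∧ y ∈ A i := by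
            intro i hi
            have h1 := Finset.mem_filter.mp hi
            exact ⟨(Finset.mem_filter.mp h1.1).2, h1.2⟩
          have hsub : lx ⊆ Dx ∪ Nx := by
            intro i hi
            have hxi : x ∈ A i := (Finset.mem_filter.mp hi).2
            rcases hbad x hx i hxi with h | h
            · exact Finset.mem_union_right _ (Finset.mem_filter.mpr ⟨hi, (hLmem i).mpr h⟩)
            · exact Finset.mem_union_left _ (Finset.mem_filter.mpr ⟨hi, h⟩)
          have hDcard : Dx.card ≤ P.card - 1 := by
            have hmaps : ∀ i ∈ Dx, f i ∈ P.erase x := by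
              intro i hi
              obtain ⟨h1, h2, h3⟩ := hfspec i (hDmem i hi).2
              exact Finset.mem_erase.mpr ⟨h2, h1⟩
            have hinj : Set.InjOn f ↑Dx := by
              intro i1 h1 i2 h2 heq
              have m1 := hDmem i1 (Finset.mem_coe.mp h1)
              have m2 := hDmem i2 (Finset.mem_coe.mp h2)
              exact hfinj i1 i2 m1.1 m2.1 m1.2 m2.2 heq
            have := Finset.card_le_card_of_injOn f hmaps hinj
            rwa [Finset.card_erase_of_mem hx] at this
          have hNcard : Nx.card ≤ Lp.card :=
            Finset.card_le_card (fun i hi => (Finset.mem_filter.mp hi).2)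
          have hucount := Finset.card_union_add_card_inter Dx Nx
          have hle : t - 1 ≤ (Dx ∪ Nx).card := by
            rw [← hpoint x]
            exact Finset.card_le_card hsub
          have hPLQ : P.card + Lp.card + Qp.card ≤ t := by rw [← hEdec]; exact hEcard
          refine ⟨by omega, ?_, by omega, ?_⟩
          · exact Finset.eq_of_subset_of_card_le
              (fun i hi => (Finset.mem_filter.mp hi).2) (by omega)
          · rw [← Finset.card_eq_zero]; omega
        -- Lp is empty
        have hLpe : Lp = ∅ := by
          rcases Lp.eq_empty_or_nonempty with h | ⟨i, hi⟩
          · exact h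
          exfalso
          obtain ⟨x, hx, y, hy, hxy⟩ := Finset.one_lt_card.mp hP2
          obtain ⟨-, hNx, -, hint⟩ := key x hx
          obtain ⟨-, hNy, -, -⟩ := key y hy
          have hix : i ∈ (Finset.univ.filter (fun i => x ∈ A i)).filter (fun i => i ∈ Lp) := by
            rw [hNx]; exact hi
          have hiy : i ∈ (Finset.univ.filter (fun i => y ∈ A i)).filter (fun i => i ∈ Lp) := by
            rw [hNy]; exact hi
          have hxAi : x ∈ A i := (Finset.mem_filter.mp (Finset.mem_filter.mp hix).1).2
          have hyAi : y ∈ A i := (Finset.mem_filter.mp (Finset.mem_filter.mp hiy).1).2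
          have hmem : i ∈ (Finset.univ.filter (fun i => x ∈ A i)).filter
              (fun i => ∃ y ∈ P, y ≠ x ∧ y ∈ A i) ∩
              (Finset.univ.filter (fun i => x ∈ A i)).filter (fun i => i ∈ Lp) := by
            refine Finset.mem_inter.mpr ⟨?_, hix⟩
            exact Finset.mem_filter.mpr ⟨Finset.mem_filter.mpr ⟨Finset.mem_univ _, hxAi⟩,
              y, hy, Ne.symm hxy, hyAi⟩
          rw [hint] at hmem
          exact Finset.notMem_empty _ hmem
        -- hence P.card = t
        obtain ⟨x0, hx0⟩ := hPne
        have hPt : P.card = t := by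
          obtain ⟨-, -, hD0, -⟩ := key x0 hx0
          have hsub : Finset.univ.filter (fun i => x0 ∈ A i) ⊆
              (Finset.univ.filter (fun i => x0 ∈ A i)).filter
                (fun i => ∃ y ∈ P, y ≠ x0 ∧ y ∈ A i) := by
            intro i hi
            have hxi : x0 ∈ A i := (Finset.mem_filter.mp hi).2
            rcases hbad x0 hx0 i hxi with h | h
            · exact absurd ((hLmem i).mpr h) (by simp [hLpe])
            · exact Finset.mem_filter.mpr ⟨hi, h⟩
          have h1 := Finset.card_le_card hsub
          rw [hpoint x0, hD0] at h1
          have h2 : P.card + Lp.card + Qp.card ≤ t := by rw [← hEdec]; exact hEcard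
          omega
        -- each line through an erased point has a unique other erased point
        have houni : ∀ x, x ∈ P → ∀ i : Fin b, x ∈ A i →
            ∃! y, y ∈ P ∧ y ≠ x ∧ y ∈ A i := by
          intro x hx i hxi
          obtain ⟨-, -, hD, -⟩ := key x hx
          obtain ⟨f, hfspec, hfinj⟩ := exists_choice_inj hpair P x
          set Dx := (Finset.univ.filter (fun i => x ∈ A i)).filter
              (fun i => ∃ y ∈ P, y ≠ x ∧ y ∈ A i) with hDxdef
          have hDmem : ∀ j ∈ Dx, x ∈ A j ∧ ∃ y ∈ P, y ≠ x ∧ y ∈ A j := by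
            intro j hj
            have h1 := Finset.mem_filter.mp hj
            exact ⟨(Finset.mem_filter.mp h1.1).2, h1.2⟩
          have hex : ∃ y ∈ P, y ≠ x ∧ y ∈ A i := by
            rcases hbad x hx i hxi with h | h
            · exact absurd ((hLmem i).mpr h) (by simp [hLpe])
            · exact h
          have hsurj := Finset.surj_on_of_inj_on_of_card_le
            (s := Dx) (t := P.erase x) (fun a _ => f a)
            (fun a ha => by
              obtain ⟨h1, h2, h3⟩ := hfspec a (hDmem a ha).2
              exact Finset.mem_erase.mpr ⟨h2, h1⟩)
            (fun a₁ a₂ ha₁ ha₂ heq => by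
              have m1 := hDmem a₁ ha₁
              have m2 := hDmem a₂ ha₂
              exact hfinj a₁ a₂ m1.1 m2.1 m1.2 m2.2 heq)
            (by rw [Finset.card_erase_of_mem hx, hD])
          have hkey : ∀ y, y ∈ P → y ≠ x → y ∈ A i → y = f i := by
            intro y hyP hyx hyA
            obtain ⟨iy, hiyD, hyf⟩ := hsurj y (Finset.mem_erase.mpr ⟨hyx, hyP⟩)
            have miy := hDmem iy hiyD
            have hfiy := hfspec iy miy.2
            have hiyi : iy = i := by
              refine Finset.card_le_one.mp (hpair x y (Ne.symm hyx)) iy ?_ i ?_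
              · exact Finset.mem_filter.mpr ⟨Finset.mem_univ _, miy.1, hyf ▸ hfiy.2.2⟩
              · exact Finset.mem_filter.mpr ⟨Finset.mem_univ _, hxi, hyA⟩
            rw [← hiyi]; exact hyf
          obtain ⟨hfP, hfx, hfA⟩ := hfspec i hex
          exact ⟨f i, ⟨hfP, hfx, hfA⟩, fun y hy => hkey y hy.1 hy.2.1 hy.2.2⟩
        -- build the fixed-point-free involution using class-0 lines
        have hline0 : ∀ x : Fin k, ∃! i : Fin b, (i : ℕ) / s = 0 ∧ x ∈ A i := by
          intro x
          exact hclass ⟨0, by omega⟩ x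
        set ix : Fin k → Fin b := fun x => (hline0 x).choose with hixdef
        have hix : ∀ x : Fin k, ((ix x : ℕ) / s = 0 ∧ x ∈ A (ix x)) :=
          fun x => (hline0 x).choose_spec.1
        have hixu : ∀ x : Fin k, ∀ j : Fin b, ((j : ℕ) / s = 0 ∧ x ∈ A j) → j = ix x :=
          fun x => (hline0 x).choose_spec.2
        set g : Fin k → Fin k :=
          fun x => if hx : x ∈ P then (houni x hx (ix x) (hix x).2).choose else x with hgdef
        have hg : ∀ x ∈ P, g x ∈ P ∧ g x ≠ x ∧ g x ∈ A (ix x) := by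
          intro x hx
          simp only [hgdef, dif_pos hx]
          exact (houni x hx (ix x) (hix x).2).choose_spec.1
        have hgg : ∀ x ∈ P, g (g x) = x := by
          intro x hx
          obtain ⟨hgP, hgx, hgA⟩ := hg x hx
          have hixg : ix (g x) = ix x := (hixu (g x) (ix x) ⟨(hix x).1, hgA⟩).symm
          have hxprop : x ∈ P ∧ x ≠ g x ∧ x ∈ A (ix (g x)) := by
            refine ⟨hx, Ne.symm hgx, ?_⟩
            rw [hixg]; exact (hix x).2
          have hxeq := (houni (g x) hgP (ix (g x)) (hix (g x)).2).choose_spec.2 x hxprop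
          show g (g x) = x
          show (if h : g x ∈ P then (houni (g x) h (ix (g x)) (hix (g x)).2).choose else g x) = x
          rw [dif_pos hgP]
          exact hxeq.symm
        have heven := even_card_of_involution P g (fun x hx => (hg x hx).1) hgg
          (fun x hx => (hg x hx).2.1)
        rw [hPt] at heven
        rw [Nat.even_iff] at heven
        rw [Nat.odd_iff] at htodd
        omega

lemma exists_goodList (k t r s b q : ℕ) (ht3 : 3 ≤ t) (hs0 : 0 < s) (hr2 : 2 ≤ r)
    (htodd : Odd t)
    (A : Fin b → Finset (Fin k)) (B : Fin q → Finset (Fin b))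
    (hline : ∀ i, (A i).card = r)
    (hpoint : ∀ x : Fin k, (Finset.univ.filter (fun i => x ∈ A i)).card = t - 1)
    (hpair : ∀ x y : Fin k, x ≠ y →
      (Finset.univ.filter (fun i => x ∈ A i ∧ y ∈ A i)).card ≤ 1)
    (hclass : ∀ ℓ : Fin (t - 1), ∀ x : Fin k,
      ∃! i : Fin b, (i : ℕ) / s = (ℓ : ℕ) ∧ x ∈ A i)
    (hBlt : ∀ i, ∀ j ∈ B i, (j : ℕ) < s)
    (hBne : ∀ i, (B i).Nonempty) (hBcard : ∀ i, (B i).card ≤ r)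
    (hBpart : ∀ j : Fin b, (j : ℕ) < s → ∃! i, j ∈ B i) :
    ∀ n : ℕ, ∀ E : Finset (Fin k ⊕ Fin b ⊕ Fin q), E.card = n → E.card ≤ t →
      ∃ L : List (Fin k ⊕ Fin b ⊕ Fin q), L.Nodup ∧ L.toFinset = E ∧
        ∀ ℓ : Fin L.length, ∃ R : Finset (Fin k ⊕ Fin b ⊕ Fin q),
          IsRecoveringSet (ConfigCode k b q A B) (L.get ℓ) R ∧ R.card ≤ r ∧
          R ⊆ Eᶜ ∪ (L.take ℓ.1).toFinset := by
  intro n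
  induction n with
  | zero =>
    intro E hE0 _
    have : E = ∅ := Finset.card_eq_zero.mp hE0
    subst this
    exact ⟨[], by simp, by simp, fun ℓ => absurd ℓ.2 (by simp)⟩
  | succ n ih =>
    intro E hEcard hEle
    have hEne : E.Nonempty := by rw [← Finset.card_pos]; omega
    obtain ⟨i, hiE, R, hR1, hR2, hR3⟩ := exists_first k t r s b q ht3 hs0 hr2 htodd A B
      hline hpoint hpair hclass hBlt hBne hBcard hBpart E hEne hEle
    obtain ⟨L, hnd, htf, hL⟩ := ih (E.erase i)
      (by rw [Finset.card_erase_of_mem hiE]; omega)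
      (by rw [Finset.card_erase_of_mem hiE]; omega)
    obtain ⟨h1, h2, h3⟩ := goodList_cons (ConfigCode k b q A B) r i E L hiE
      ⟨R, hR1, hR2, hR3⟩ hnd htf hL
    exact ⟨i :: L, h1, h2, h3⟩

/-- Theorem 3: given a `(k_{t-1}, b_r)` resolvable configuration on `X = [k]`
whose lines are ordered so that for each `ℓ` the lines with index `i` satisfying
`i / s = ℓ` form a parallel class (`s = k/r`, `b = s(t-1)`), and a partition of the
first `s` line-indices into `q = ⌈s/r⌉` nonempty blocks `B i` of size at most `r`,
if `t` is odd then the binary code with parity check matrix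
`H = [[M, I_b, 0], [0, W, I_q]]` is an `(n, k, r, t)`-SLRC with length
`n = k + b + q` and dimension `k`; hence its rate is `k/n = (1 + (t-1)/r + q/k)⁻¹`. -/
theorem configCode_is_SLRC (k t r s b q : ℕ) (hr2 : 2 ≤ r) (hrk : r < k)
    (hk : k = r * s) (hb : b = s * (t - 1)) (hq : q = (s + r - 1) / r)
    (htodd : Odd t)
    (A : Fin b → Finset (Fin k))
    (hline : ∀ i, (A i).card = r)
    (hpoint : ∀ x : Fin k, (Finset.univ.filter (fun i => x ∈ A i)).card = t - 1)
    (hpair : ∀ x y : Fin k, x ≠ y →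
      (Finset.univ.filter (fun i => x ∈ A i ∧ y ∈ A i)).card ≤ 1)
    (hclass : ∀ ℓ : Fin (t - 1), ∀ x : Fin k,
      ∃! i : Fin b, (i : ℕ) / s = (ℓ : ℕ) ∧ x ∈ A i)
    (B : Fin q → Finset (Fin b))
    (hBlt : ∀ i, ∀ j ∈ B i, (j : ℕ) < s)
    (hBne : ∀ i, (B i).Nonempty)
    (hBcard : ∀ i, (B i).card ≤ r)
    (hBpart : ∀ j : Fin b, (j : ℕ) < s → ∃! i, j ∈ B i) :
    IsSLRC (ConfigCode k b q A B) r t ∧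
    Module.finrank (ZMod 2) (ConfigCode k b q A B) = k ∧
    Fintype.card (Fin k ⊕ Fin b ⊕ Fin q) = k + b + q ∧
    (k : ℚ) / ((k : ℚ) + b + q) = (1 + ((t : ℚ) - 1) / r + (q : ℚ) / k)⁻¹ := by
  have hs2 : 2 ≤ s := by
    by_contra h
    push_neg at h
    have : r * s ≤ r * 1 := Nat.mul_le_mul_left r (by omega)
    omega
  have hq1 : 1 ≤ q := by
    rw [hq]
    rw [Nat.one_le_div_iff (by omega)]
    omega
  have ht3 : 3 ≤ t := by
    rcases htodd with ⟨m, hm⟩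
    rcases Nat.eq_or_lt_of_le (show 1 ≤ t by omega) with h1 | h1
    · exfalso
      have hb0 : b = 0 := by rw [hb, ← h1]; simp
      obtain ⟨j, -⟩ := hBne ⟨0, by omega⟩
      exact absurd j.2 (by omega)
    · omega
  refine ⟨?_, finrank_configCode k b q A B, by simp [Fintype.card_sum, Nat.add_assoc],
    rate_eq k t r s b q hr2 hrk ht3 hk hb⟩
  intro E hE
  exact exists_goodList k t r s b q ht3 (by omega) hr2 htodd A B
    hline hpoint hpair hclass hBlt hBne hBcard hBpart E.card E rfl hE
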